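/- Let A be a real symmetric n×n matrix with A_{ij} ≥ 0 for all i ≠ j, and suppose u ∈ ℝ^n has all entries strictly positive and satisfies A u = 0. Then for every f ∈ ℝ^n, ⟨f ∘ u, (-A)(f ∘ u)⟩ = (1/2) ∑_{i,j} A_{ij} u_i u_j (f_i - f_j)^2, where (f ∘ u)_i = f_i u_i. In particular, -A is positive semidefinite. -/

import Mathlib

open Matrix

/-- Ground state representation for finite matrices with nonnegative
off-diagonal entries: if `A u = 0` for a strictly positive vector `u`, then the
quadratic form of `-A` on Hadamard products `f ∘ u` has the stated form, and
`-A` is positive semidefinite. -/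
theorem groundStateRepresentation_matrix {n : ℕ} (A : Matrix (Fin n) (Fin n) ℝ)
    (hA : A.IsSymm) (hoff : ∀ i j, i ≠ j → 0 ≤ A i j)
    (u : Fin n → ℝ) (hu : ∀ i, 0 < u i) (hAu : A *ᵥ u = 0) :
    (∀ f : Fin n → ℝ,
      (fun i => f i * u i) ⬝ᵥ ((-A) *ᵥ (fun i => f i * u i)) =
        (1 / 2) * ∑ i, ∑ j, A i j * u i * u j * (f i - f j) ^ 2) ∧
    (-A).PosSemidef := by
  have h0 : ∀ i, ∑ j, A i j * u j = 0 := by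
    intro i
    have := congrFun hAu i
    simpa [mulVec, dotProduct] using this
  have hsym : ∀ i j, A j i = A i j := fun i j => hA.apply i j
  have key : ∀ f : Fin n → ℝ,
      (fun i => f i * u i) ⬝ᵥ ((-A) *ᵥ (fun i => f i * u i)) =
        (1 / 2) * ∑ i, ∑ j, A i j * u i * u j * (f i - f j) ^ 2 := by
    intro f
    have expand : ∀ i j, A i j * u i * u j * (f i - f j) ^ 2 =
        (A i j * u j) * (u i * f i ^ 2) - 2 * (A i j * u i * u j * (f i * f j))
          + (A i j * u i) * (u j * f j ^ 2) := by
      intros; ring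
    have S1 : ∀ i, ∑ j, (A i j * u j) * (u i * f i ^ 2) = 0 := by
      intro i
      rw [← Finset.sum_mul, h0 i, zero_mul]
    have S3 : (∑ i, ∑ j, (A i j * u i) * (u j * f j ^ 2)) = 0 := by
      rw [Finset.sum_comm]
      apply Finset.sum_eq_zero
      intro j _
      have : ∑ i, A i j * u i = 0 := by
        rw [← h0 j]
        exact Finset.sum_congr rfl fun i _ => by rw [hsym i j]
      calc ∑ i, (A i j * u i) * (u j * f j ^ 2)
          = (∑ i, A i j * u i) * (u j * f j ^ 2) := by rw [Finset.sum_mul]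
        _ = 0 := by rw [this, zero_mul]
    have hRHS : (∑ i, ∑ j, A i j * u i * u j * (f i - f j) ^ 2)
        = -2 * ∑ i, ∑ j, A i j * u i * u j * (f i * f j) := by
      calc (∑ i, ∑ j, A i j * u i * u j * (f i - f j) ^ 2)
          = ∑ i, ∑ j, ((A i j * u j) * (u i * f i ^ 2)
              - 2 * (A i j * u i * u j * (f i * f j))
              + (A i j * u i) * (u j * f j ^ 2)) := by
            exact Finset.sum_congr rfl fun i _ =>
              Finset.sum_congr rfl fun j _ => expand i j
        _ = (∑ i, ∑ j, (A i j * u j) * (u i * f i ^ 2))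
              - (∑ i, ∑ j, 2 * (A i j * u i * u j * (f i * f j)))
              + (∑ i, ∑ j, (A i j * u i) * (u j * f j ^ 2)) := by
            simp [Finset.sum_add_distrib, Finset.sum_sub_distrib]
        _ = -2 * ∑ i, ∑ j, A i j * u i * u j * (f i * f j) := by
            rw [S3]
            simp only [S1, Finset.sum_const_zero, zero_sub, add_zero,
              ← Finset.mul_sum]
            ring
    have hLHS : (fun i => f i * u i) ⬝ᵥ ((-A) *ᵥ (fun i => f i * u i)) =
        -∑ i, ∑ j, A i j * u i * u j * (f i * f j) := by
      simp only [dotProduct, mulVec, Matrix.neg_apply, Finset.mul_sum, ← Finset.sum_neg_distrib]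
      exact Finset.sum_congr rfl fun i _ => Finset.sum_congr rfl fun j _ => by ring
    rw [hLHS, hRHS]; ring
  refine ⟨key, Matrix.posSemidef_iff_dotProduct_mulVec.mpr ⟨?_, ?_⟩⟩
  · have : (-A).IsSymm := hA.neg
    simpa [Matrix.IsHermitian, Matrix.IsSymm] using this
  · intro x
    set f : Fin n → ℝ := fun i => x i / u i with hf
    have hx : x = fun i => f i * u i := by
      funext i
      exact (div_mul_cancel₀ (x i) (hu i).ne').symm
    have := key f
    rw [← hx] at this
    simp only [RCLike.re_to_real, star_trivial]
    rw [this]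
    have : 0 ≤ ∑ i, ∑ j, A i j * u i * u j * (f i - f j) ^ 2 := by
      apply Finset.sum_nonneg; intro i _
      apply Finset.sum_nonneg; intro j _
      rcases eq_or_ne i j with rfl | h
      · simp
      · exact mul_nonneg (mul_nonneg (mul_nonneg (hoff i j h) (hu i).le)
          (hu j).le) (sq_nonneg _)
    linarith
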